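/- Let Δ > 0, r, δ* > 0, p be real numbers, and let (X, P) be a pair of random variables with X ≥ 0 almost surely, E[X] = r, E[P] = p, and P ≤ pmax(X) almost surely, where pmax(x) = 1 − Δ + x for 0 ≤ x ≤ Δ and pmax(x) = 1 + Δ − x for x ≥ Δ. Then P(X ≥ Δ + δ*) ≤ (1 − Δ + r − p)/(2δ*). -/

import Mathlib

open MeasureTheory

/-- Maximal treatment probability compatible with gain `x`. -/
noncomputable def pmax (Δ x : ℝ) : ℝ := if x ≤ Δ then 1 - Δ + x else 1 + Δ - x

theorem stmt_1 {Ω : Type*} [MeasurableSpace Ω] (μ : Measure Ω) [IsProbabilityMeasure μ]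
    (Δ r δs p : ℝ) (hΔ : Δ > 0) (hδ : δs > 0)
    (X P : Ω → ℝ) (hXint : Integrable X μ) (hPint : Integrable P μ)
    (hXge : ∀ᵐ ω ∂μ, X ω ≥ 0)
    (hXmean : ∫ ω, X ω ∂μ = r)
    (hPmean : ∫ ω, P ω ∂μ = p)
    (hfeas : ∀ᵐ ω ∂μ, P ω ≤ pmax Δ (X ω)) :
    (μ {ω | X ω ≥ Δ + δs}).toReal ≤ (1 - Δ + r - p) / (2 * δs) := by
  set Z : Ω → ℝ := fun ω => 1 - Δ + X ω - P ω with hZ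
  have hZint : Integrable Z μ := ((integrable_const (1 - Δ)).add hXint).sub hPint
  have hZmean : ∫ ω, Z ω ∂μ = 1 - Δ + r - p := by
    have h1 : ∫ ω, Z ω ∂μ = ∫ ω, ((fun _ => (1 - Δ : ℝ)) ω + (X - P) ω) ∂μ := by
      congr 1; funext ω; simp [hZ]; ring
    rw [h1, integral_add (integrable_const _) (hXint.sub hPint), integral_const]
    simp only [Pi.sub_apply]
    rw [integral_sub hXint hPint, hXmean, hPmean]
    simp
    ring
  have hZnn : 0 ≤ᵐ[μ] Z := by
    filter_upwards [hXge, hfeas] with ω h0 hf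
    have hp : pmax Δ (X ω) ≤ 1 - Δ + X ω := by
      unfold pmax; split_ifs with h
      · linarith
      · push_neg at h; linarith
    show (0:ℝ) ≤ Z ω
    simp only [hZ]
    linarith
  have hsub : μ {ω | X ω ≥ Δ + δs} ≤ μ {ω | 2 * δs ≤ Z ω} := by
    apply measure_mono_ae
    filter_upwards [hfeas] with ω hf hmem
    have hx : X ω ≥ Δ + δs := hmem
    have hnot : ¬ X ω ≤ Δ := by linarith
    have hpe : pmax Δ (X ω) = 1 + Δ - X ω := by unfold pmax; rw [if_neg hnot]
    show 2 * δs ≤ Z ω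
    simp only [hZ]
    linarith [hf.trans_eq hpe]
  have hmar := mul_meas_ge_le_integral_of_nonneg hZnn hZint (2 * δs)
  rw [hZmean] at hmar
  have hfin : (μ {ω | X ω ≥ Δ + δs}).toReal ≤ (μ {ω | 2 * δs ≤ Z ω}).toReal :=
    ENNReal.toReal_mono (measure_ne_top _ _) hsub
  rw [le_div_iff₀ (by positivity)]
  calc (μ {ω | X ω ≥ Δ + δs}).toReal * (2 * δs)
      ≤ (μ {ω | 2 * δs ≤ Z ω}).toReal * (2 * δs) :=
        mul_le_mul_of_nonneg_right hfin (by positivity)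
    _ ≤ 1 - Δ + r - p := by rw [mul_comm]; exact hmar
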